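/- arXiv:1305.1260 — 2 statements merged into one kernel-verified Lean document; each statement's English description precedes it below -/
import Mathlib

section
/- For l = (p−1)/2 and ω_i = (a^i − a^{−i})(1 + b), ω_i' = (a^i − a^{−i})(1 − b), the F-subspace Σ_{i=1}^{l} F ω_i ω_i' of FD_{2p} equals the F-span of { (a − a^{−1})^{2k}(1 − b) : 1 ≤ k ≤ l }, and likewise Σ_{i=1}^{l} F ω_i' ω_i equals the F-span of { (a − a^{−1})^{2k}(1 + b) : 1 ≤ k ≤ l }. -/
noncomputable section

open MonoidAlgebra

abbrev Dg (p : ℕ) := DihedralGroup p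

def aa (p : ℕ) : Dg p := DihedralGroup.r 1
def bb (p : ℕ) : Dg p := DihedralGroup.sr 0

abbrev FG (p : ℕ) (F : Type) [Field F] := MonoidAlgebra F (Dg p)

/-- The cyclic subgroup `A = ⟨a⟩` of the dihedral group. -/
def Asub (p : ℕ) : Subgroup (Dg p) := Subgroup.zpowers (aa p)

/-- `Γ(A)` : the ideal of `FD_{2p}` generated by `{h - 1 : h ∈ A}`. -/
def gammaA (p : ℕ) (F : Type) [Field F] : Ideal (FG p F) :=
  Ideal.span ((fun h => (MonoidAlgebra.of F (Dg p) h : FG p F) - 1) '' (Asub p : Set (Dg p)))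

/-- The set `1 + Γ(A)`. -/
def oneGamma (p : ℕ) (F : Type) [Field F] : Set (FG p F) :=
  {x | x - 1 ∈ gammaA p F}

/-- The canonical involution `Σ x_g g ↦ Σ x_g g⁻¹`. -/
def invo (p : ℕ) (F : Type) [Field F] (x : FG p F) : FG p F :=
  MonoidAlgebra.ofCoeff (Finsupp.equivMapDomain (Equiv.inv (Dg p)) x.coeff)

/-- An element is a unitary unit if `x* = x⁻¹`. -/
def IsUnitary (p : ℕ) (F : Type) [Field F] (x : FG p F) : Prop :=
  x * invo p F x = 1 ∧ invo p F x * x = 1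

/-- The set of unitary units of `FD_{2p}`. -/
def unitarySet (p : ℕ) (F : Type) [Field F] : Set (FG p F) := {x | IsUnitary p F x}

/-- The augmentation map. -/
def aug (p : ℕ) (F : Type) [Field F] (x : FG p F) : F := x.coeff.sum fun _ c => c

/-- Membership in the group algebra `FA` of the subgroup `A`, viewed inside `FD_{2p}`. -/
def memFA (p : ℕ) (F : Type) [Field F] (x : FG p F) : Prop := ∀ g ∈ x.coeff.support, g ∈ Asub p

/-- `V_*(FA)`: unitary units of augmentation 1 supported on `A`. -/
def VstarFA (p : ℕ) (F : Type) [Field F] : Set (FG p F) :=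
  {x | memFA p F x ∧ aug p F x = 1 ∧ IsUnitary p F x}

/-- `S_*(FA)`: symmetric units of augmentation 1 supported on `A`. -/
def SstarFA (p : ℕ) (F : Type) [Field F] : Set (FG p F) :=
  {x | memFA p F x ∧ aug p F x = 1 ∧ IsUnit x ∧ invo p F x = x}

/-- `ω_i = (a^i - a^{-i})(1 + b)`. -/
def ww (p : ℕ) (F : Type) [Field F] (i : ℕ) : FG p F :=
  ((of F (Dg p) ((aa p) ^ i) : FG p F) - of F (Dg p) ((aa p) ^ i)⁻¹) *
    (1 + of F (Dg p) (bb p))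

/-- `ω_i' = (a^i - a^{-i})(1 - b)`. -/
def ww' (p : ℕ) (F : Type) [Field F] (i : ℕ) : FG p F :=
  ((of F (Dg p) ((aa p) ^ i) : FG p F) - of F (Dg p) ((aa p) ^ i)⁻¹) *
    (1 - of F (Dg p) (bb p))

/-- `L = ⊕_{i=1}^{l} F ω_i'`. -/
def Lsub (p : ℕ) (F : Type) [Field F] : Submodule F (FG p F) :=
  Submodule.span F {x | ∃ i, 1 ≤ i ∧ i ≤ (p - 1) / 2 ∧ x = ww' p F i}

/-- `U = ⊕_{i=1}^{l} F ω_i`. -/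
def Usub (p : ℕ) (F : Type) [Field F] : Submodule F (FG p F) :=
  Submodule.span F {x | ∃ i, 1 ≤ i ∧ i ≤ (p - 1) / 2 ∧ x = ww p F i}

/-- `D = ⊕_{i=1}^{l} F ω_iω_i' ⊕ ⊕_{i=1}^{l} F ω_i'ω_i`. -/
def Dsub (p : ℕ) (F : Type) [Field F] : Submodule F (FG p F) :=
  Submodule.span F {x | ∃ i, 1 ≤ i ∧ i ≤ (p - 1) / 2 ∧
    (x = ww p F i * ww' p F i ∨ x = ww' p F i * ww p F i)}

section Aux

variable (p : ℕ) (F : Type) [Field F]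

def ee (m : ℤ) : FG p F := of F (Dg p) (DihedralGroup.r (m : ZMod p))

lemma ee_mul (m n : ℤ) : ee p F m * ee p F n = ee p F (m + n) := by
  simp [ee, ← map_mul]

lemma ee_zero : ee p F 0 = 1 := by
  simp only [ee, Int.cast_zero, ← DihedralGroup.one_def, map_one]

lemma of_pow (i : ℕ) : of F (Dg p) ((aa p) ^ i) = ee p F i := by
  simp [aa, ee, DihedralGroup.r_one_pow]

lemma of_pow_inv (i : ℕ) : of F (Dg p) ((aa p) ^ i)⁻¹ = ee p F (-i) := by
  have : ((aa p) ^ i)⁻¹ = DihedralGroup.r (-(i : ZMod p)) := by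
    rw [aa, DihedralGroup.r_one_pow]; rfl
  simp [this, ee]

lemma hBe (m : ℤ) : of F (Dg p) (bb p) * ee p F m = ee p F (-m) * of F (Dg p) (bb p) := by
  simp [ee, bb, ← map_mul]

/-- `s_i = (a^i - a^{-i})^2` expressed via `ee`. -/
def sS (i : ℕ) : FG p F := ee p F (2 * i) + ee p F (-(2 * i)) - 1 - 1

lemma sS_zero : sS p F 0 = 0 := by
  simp [sS, ee_zero]

lemma hs (i : ℕ) :
    ((of F (Dg p) ((aa p) ^ i) : FG p F) - of F (Dg p) ((aa p) ^ i)⁻¹) ^ 2 = sS p F i := by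
  rw [of_pow, of_pow_inv, sS, sq]
  have h2 : (2 : ℤ) * i = i + i := by ring
  have h2' : (-((i:ℤ) + i)) = -i + -i := by ring
  rw [h2, h2']
  simp only [sub_mul, mul_sub, ee_mul, add_neg_cancel, neg_add_cancel, ee_zero]
  abel

lemma hrec (i : ℕ) (hi : 1 ≤ i) :
    sS p F (i+1) + sS p F (i-1) =
      sS p F 1 * sS p F i + (sS p F 1 + sS p F 1) + (sS p F i + sS p F i) := by
  obtain ⟨j, rfl⟩ : ∃ j, i = j + 1 := ⟨i - 1, (Nat.succ_pred_eq_of_pos hi).symm⟩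
  simp only [Nat.add_sub_cancel, sS]
  push_cast
  simp only [sub_mul, mul_sub, add_mul, mul_add, one_mul, mul_one, ee_mul]
  ring_nf
  abel

def Pm (m : ℕ) : Submodule F (FG p F) :=
  Submodule.span F {x | ∃ i, 1 ≤ i ∧ i ≤ m ∧ x = sS p F i}

def Qm (m : ℕ) : Submodule F (FG p F) :=
  Submodule.span F {x | ∃ k, 1 ≤ k ∧ k ≤ m ∧ x = (sS p F 1) ^ k}

lemma Pm_mono {m m' : ℕ} (h : m ≤ m') : Pm p F m ≤ Pm p F m' :=
  Submodule.span_mono (fun x ⟨i, h1, h2, hx⟩ => ⟨i, h1, h2.trans h, hx⟩)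

lemma Qm_mono {m m' : ℕ} (h : m ≤ m') : Qm p F m ≤ Qm p F m' :=
  Submodule.span_mono (fun x ⟨k, h1, h2, hx⟩ => ⟨k, h1, h2.trans h, hx⟩)

lemma sS_mem_P {i m : ℕ} (h1 : 1 ≤ i) (h2 : i ≤ m) : sS p F i ∈ Pm p F m :=
  Submodule.subset_span ⟨i, h1, h2, rfl⟩

lemma s1_mul_mem {i m : ℕ} (h2 : i ≤ m) : sS p F 1 * sS p F i ∈ Pm p F (m + 1) := by
  rcases Nat.eq_zero_or_pos i with h0 | h1
  · rw [h0, sS_zero, mul_zero]; exact zero_mem _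
  have hmul : sS p F 1 * sS p F i =
      (sS p F (i+1) + sS p F (i-1)) - (sS p F 1 + sS p F 1) - (sS p F i + sS p F i) := by
    rw [hrec p F i h1]; abel
  rw [hmul]
  have hi1 : sS p F (i+1) ∈ Pm p F (m+1) := sS_mem_P p F (by omega) (by omega)
  have him : sS p F (i-1) ∈ Pm p F (m+1) := by
    rcases Nat.eq_zero_or_pos (i-1) with h0' | h1'
    · rw [h0', sS_zero]; exact zero_mem _
    · exact sS_mem_P p F h1' (by omega)
  have hs1 : sS p F 1 ∈ Pm p F (m+1) := sS_mem_P p F le_rfl (by omega)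
  have hsi : sS p F i ∈ Pm p F (m+1) := sS_mem_P p F h1 (by omega)
  exact sub_mem (sub_mem (add_mem hi1 him) (add_mem hs1 hs1)) (add_mem hsi hsi)

lemma memP : ∀ k, 1 ≤ k → (sS p F 1) ^ k ∈ Pm p F k := by
  intro k hk
  induction k, hk using Nat.le_induction with
  | base => rw [pow_one]; exact sS_mem_P p F le_rfl le_rfl
  | succ n hn ih =>
    rw [pow_succ']
    have : sS p F 1 * (sS p F 1) ^ n =
        (LinearMap.mulLeft F (sS p F 1)) ((sS p F 1) ^ n) := rfl
    rw [this]
    have hmap : Submodule.map (LinearMap.mulLeft F (sS p F 1)) (Pm p F n) ≤ Pm p F (n+1) := by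
      rw [Pm, Submodule.map_span]
      apply Submodule.span_le.2
      rintro x ⟨y, ⟨i, hi1, hi2, rfl⟩, rfl⟩
      exact s1_mul_mem p F hi2
    exact hmap (Submodule.mem_map_of_mem ih)

lemma memQ : ∀ i, sS p F i ∈ Qm p F i := by
  intro i
  induction i using Nat.strong_induction_on with
  | _ i ih =>
    match i with
    | 0 => rw [sS_zero]; exact zero_mem _
    | 1 => exact Submodule.subset_span ⟨1, le_rfl, le_rfl, (pow_one _).symm⟩
    | (j+2) =>
      have h := hrec p F (j+1) (by omega)
      simp only [Nat.add_sub_cancel] at h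
      have hmul : sS p F (j+2) =
          sS p F 1 * sS p F (j+1) + (sS p F 1 + sS p F 1) +
            (sS p F (j+1) + sS p F (j+1)) - sS p F j := by
        rw [← h]; abel
      rw [hmul]
      have h1 : sS p F 1 * sS p F (j+1) ∈ Qm p F (j+2) := by
        have : sS p F 1 * sS p F (j+1) =
            (LinearMap.mulLeft F (sS p F 1)) (sS p F (j+1)) := rfl
        rw [this]
        have hmap : Submodule.map (LinearMap.mulLeft F (sS p F 1)) (Qm p F (j+1)) ≤
            Qm p F (j+2) := by
          rw [Qm, Submodule.map_span]
          apply Submodule.span_le.2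
          rintro x ⟨y, ⟨k, hk1, hk2, rfl⟩, rfl⟩
          exact Submodule.subset_span ⟨k+1, by omega, by omega, (pow_succ' _ _).symm⟩
        exact hmap (Submodule.mem_map_of_mem (ih (j+1) (by omega)))
      have hq1 : sS p F 1 ∈ Qm p F (j+2) :=
        Submodule.subset_span ⟨1, le_rfl, by omega, (pow_one _).symm⟩
      have hqj1 : sS p F (j+1) ∈ Qm p F (j+2) := Qm_mono p F (by omega) (ih (j+1) (by omega))
      have hqj : sS p F j ∈ Qm p F (j+2) := Qm_mono p F (by omega) (ih j (by omega))
      exact sub_mem (add_mem (add_mem h1 (add_mem hq1 hq1)) (add_mem hqj1 hqj1)) hqj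

lemma hB2 : (of F (Dg p) (bb p) : FG p F) * of F (Dg p) (bb p) = 1 := by
  rw [← map_mul]
  simp only [bb, DihedralGroup.sr_mul_sr, sub_self, ← DihedralGroup.one_def, map_one]

lemma comm1 (i : ℕ) :
    (1 + of F (Dg p) (bb p)) * ((of F (Dg p) ((aa p) ^ i) : FG p F) - of F (Dg p) ((aa p) ^ i)⁻¹)
      = ((of F (Dg p) ((aa p) ^ i) : FG p F) - of F (Dg p) ((aa p) ^ i)⁻¹) *
          (1 - of F (Dg p) (bb p)) := by
  rw [of_pow, of_pow_inv]
  simp only [add_mul, mul_add, sub_mul, mul_sub, one_mul, mul_one, hBe, neg_neg]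
  abel

lemma comm1' (i : ℕ) :
    (1 - of F (Dg p) (bb p)) * ((of F (Dg p) ((aa p) ^ i) : FG p F) - of F (Dg p) ((aa p) ^ i)⁻¹)
      = ((of F (Dg p) ((aa p) ^ i) : FG p F) - of F (Dg p) ((aa p) ^ i)⁻¹) *
          (1 + of F (Dg p) (bb p)) := by
  rw [of_pow, of_pow_inv]
  simp only [add_mul, mul_add, sub_mul, mul_sub, one_mul, mul_one, hBe, neg_neg]
  abel

lemma sqc : ((1 : FG p F) - of F (Dg p) (bb p)) * (1 - of F (Dg p) (bb p))
    = (1 - of F (Dg p) (bb p)) + (1 - of F (Dg p) (bb p)) := by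
  simp only [mul_sub, sub_mul, one_mul, mul_one, hB2]
  abel

lemma sqc' : ((1 : FG p F) + of F (Dg p) (bb p)) * (1 + of F (Dg p) (bb p))
    = (1 + of F (Dg p) (bb p)) + (1 + of F (Dg p) (bb p)) := by
  simp only [mul_add, add_mul, one_mul, mul_one, hB2]
  abel

lemma hww (i : ℕ) : ww p F i * ww' p F i
    = (2 : F) • (sS p F i * (1 - of F (Dg p) (bb p))) := by
  set t : FG p F := (of F (Dg p) ((aa p) ^ i) : FG p F) - of F (Dg p) ((aa p) ^ i)⁻¹ with ht
  set B : FG p F := of F (Dg p) (bb p) with hB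
  have htt : t * t = sS p F i := by rw [← sq]; exact hs p F i
  calc ww p F i * ww' p F i = (t * (1 + B)) * (t * (1 - B)) := rfl
    _ = t * (((1 + B) * t) * (1 - B)) := by rw [mul_assoc, mul_assoc]
    _ = t * ((t * (1 - B)) * (1 - B)) := by rw [comm1]
    _ = (t * t) * ((1 - B) * (1 - B)) := by rw [mul_assoc t, ← mul_assoc]
    _ = sS p F i * ((1 - B) + (1 - B)) := by rw [htt, sqc]
    _ = (2 : F) • (sS p F i * (1 - B)) := by rw [mul_add, two_smul]

lemma hw'w (i : ℕ) : ww' p F i * ww p F i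
    = (2 : F) • (sS p F i * (1 + of F (Dg p) (bb p))) := by
  set t : FG p F := (of F (Dg p) ((aa p) ^ i) : FG p F) - of F (Dg p) ((aa p) ^ i)⁻¹ with ht
  set B : FG p F := of F (Dg p) (bb p) with hB
  have htt : t * t = sS p F i := by rw [← sq]; exact hs p F i
  calc ww' p F i * ww p F i = (t * (1 - B)) * (t * (1 + B)) := rfl
    _ = t * (((1 - B) * t) * (1 + B)) := by rw [mul_assoc, mul_assoc]
    _ = t * ((t * (1 + B)) * (1 + B)) := by rw [comm1']
    _ = (t * t) * ((1 + B) * (1 + B)) := by rw [mul_assoc t, ← mul_assoc]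
    _ = sS p F i * ((1 + B) + (1 + B)) := by rw [htt, sqc']
    _ = (2 : F) • (sS p F i * (1 + B)) := by rw [mul_add, two_smul]

lemma upow (k : ℕ) :
    ((of F (Dg p) (aa p) : FG p F) - of F (Dg p) (aa p)⁻¹) ^ (2 * k) = (sS p F 1) ^ k := by
  have h1 := hs p F 1
  rw [pow_one] at h1
  rw [pow_mul, h1]

lemma span_eq_aux (l : ℕ) (hl1 : 1 ≤ l) (h2 : (2 : F) ≠ 0) (c : FG p F) (w : ℕ → FG p F)
    (hw : ∀ i, w i = (2 : F) • (sS p F i * c)) :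
    Submodule.span F {x : FG p F | ∃ i, 1 ≤ i ∧ i ≤ l ∧ x = w i} =
      Submodule.span F {x : FG p F | ∃ k, 1 ≤ k ∧ k ≤ l ∧ x = (sS p F 1) ^ k * c} := by
  apply le_antisymm <;> rw [Submodule.span_le]
  · rintro x ⟨i, hi1, hi2, rfl⟩
    rw [hw]
    apply Submodule.smul_mem
    have hmem : sS p F i ∈ Qm p F l := Qm_mono p F hi2 (memQ p F i)
    have : sS p F i * c = (LinearMap.mulRight F c) (sS p F i) := rfl
    rw [this]
    have hmap : Submodule.map (LinearMap.mulRight F c) (Qm p F l) ≤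
        Submodule.span F {x : FG p F | ∃ k, 1 ≤ k ∧ k ≤ l ∧ x = (sS p F 1) ^ k * c} := by
      rw [Qm, Submodule.map_span]
      apply Submodule.span_le.2
      rintro x ⟨y, ⟨k, hk1, hk2, rfl⟩, rfl⟩
      exact Submodule.subset_span ⟨k, hk1, hk2, rfl⟩
    exact hmap (Submodule.mem_map_of_mem hmem)
  · rintro x ⟨k, hk1, hk2, rfl⟩
    have hmem : (sS p F 1) ^ k ∈ Pm p F l := Pm_mono p F hk2 (memP p F k hk1)
    have : (sS p F 1) ^ k * c = (LinearMap.mulRight F c) ((sS p F 1) ^ k) := rfl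
    rw [this]
    have hmap : Submodule.map (LinearMap.mulRight F c) (Pm p F l) ≤
        Submodule.span F {x : FG p F | ∃ i, 1 ≤ i ∧ i ≤ l ∧ x = w i} := by
      rw [Pm, Submodule.map_span]
      apply Submodule.span_le.2
      rintro x ⟨y, ⟨i, hi1, hi2, rfl⟩, rfl⟩
      have hc : (LinearMap.mulRight F c) (sS p F i) = (2 : F)⁻¹ • w i := by
        rw [hw i, LinearMap.mulRight_apply, smul_smul, inv_mul_cancel₀ h2, one_smul]
      rw [hc]
      exact Submodule.smul_mem _ _ (Submodule.subset_span ⟨i, hi1, hi2, rfl⟩)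
    exact hmap (Submodule.mem_map_of_mem hmem)

end Aux

/-- `Σ_{i=1}^{l} F ω_iω_i'` equals the `F`-span of
`{(a - a^{-1})^{2k}(1-b) : 1 ≤ k ≤ l}`, and `Σ_{i=1}^{l} F ω_i'ω_i` equals the `F`-span
of `{(a - a^{-1})^{2k}(1+b) : 1 ≤ k ≤ l}`. -/
theorem stmt14 (p : ℕ) (hp : p.Prime) (hodd : Odd p)
    (F : Type) [Field F] [Fintype F] [CharP F p] :
    ∀ l : ℕ, l = (p - 1) / 2 →
    Submodule.span F {x : FG p F | ∃ i, 1 ≤ i ∧ i ≤ l ∧ x = ww p F i * ww' p F i} =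
      Submodule.span F {x : FG p F | ∃ k, 1 ≤ k ∧ k ≤ l ∧
        x = ((of F (Dg p) (aa p) : FG p F) - of F (Dg p) (aa p)⁻¹) ^ (2 * k) *
              (1 - of F (Dg p) (bb p))} ∧
    Submodule.span F {x : FG p F | ∃ i, 1 ≤ i ∧ i ≤ l ∧ x = ww' p F i * ww p F i} =
      Submodule.span F {x : FG p F | ∃ k, 1 ≤ k ∧ k ≤ l ∧
        x = ((of F (Dg p) (aa p) : FG p F) - of F (Dg p) (aa p)⁻¹) ^ (2 * k) *
              (1 + of F (Dg p) (bb p))} := by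
  intro l hl
  have hp2 : 2 ≤ p := hp.two_le
  have hpne2 : p ≠ 2 := by
    rintro rfl
    simp [Nat.odd_iff] at hodd
  have hp3 : 3 ≤ p := by omega
  have hl1 : 1 ≤ l := by omega
  have h2 : (2 : F) ≠ 0 := by
    intro h
    have hd : (p : ℕ) ∣ 2 := (CharP.cast_eq_zero_iff F p 2).1 (by exact_mod_cast h)
    have := Nat.le_of_dvd (by norm_num) hd
    omega
  constructor
  · have hset1 : {x : FG p F | ∃ k, 1 ≤ k ∧ k ≤ l ∧
        x = ((of F (Dg p) (aa p) : FG p F) - of F (Dg p) (aa p)⁻¹) ^ (2 * k) *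
              (1 - of F (Dg p) (bb p))}
        = {x : FG p F | ∃ k, 1 ≤ k ∧ k ≤ l ∧
            x = (sS p F 1) ^ k * (1 - of F (Dg p) (bb p))} := by
      simp only [upow]
    rw [hset1]
    exact span_eq_aux p F l hl1 h2 (1 - of F (Dg p) (bb p))
      (fun i => ww p F i * ww' p F i) (fun i => hww p F i)
  · have hset2 : {x : FG p F | ∃ k, 1 ≤ k ∧ k ≤ l ∧
        x = ((of F (Dg p) (aa p) : FG p F) - of F (Dg p) (aa p)⁻¹) ^ (2 * k) *
              (1 + of F (Dg p) (bb p))}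
        = {x : FG p F | ∃ k, 1 ≤ k ∧ k ≤ l ∧
            x = (sS p F 1) ^ k * (1 + of F (Dg p) (bb p))} := by
      simp only [upow]
    rw [hset2]
    exact span_eq_aux p F l hl1 h2 (1 + of F (Dg p) (bb p))
      (fun i => ww' p F i * ww p F i) (fun i => hw'w p F i)
end
end

section
/- The unit group 𝒰(FD_{2p}) is isomorphic to the semidirect product (1 + Γ(A)) ⋊ (F^* × F^*), where F^* is the multiplicative group of F: the natural epimorphism 𝒰(FD_{2p}) → 𝒰(FC_2) ≅ F^* × F^* induced by the quotient D_{2p} → D_{2p}/A has kernel 1 + Γ(A) and splits. -/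
noncomputable section
open MonoidAlgebra
/-- The sign homomorphism `D_{2p} → C₂`, trivial on rotations. -/
def sgn (p : ℕ) : Dg p →* Multiplicative (ZMod 2) where
  toFun g := match g with
    | DihedralGroup.r _ => 1
    | DihedralGroup.sr _ => Multiplicative.ofAdd 1
  map_one' := rfl
  map_mul' := by
    rintro (i | i) (j | j) <;>
      simp only [DihedralGroup.r_mul_r, DihedralGroup.r_mul_sr, DihedralGroup.sr_mul_r,
        DihedralGroup.sr_mul_sr] <;> decide

/-- `1 + Γ(A)` as a subgroup of the unit group of `FD_{2p}`. -/
def oneGammaU (p : ℕ) (F : Type) [Field F] : Subgroup (FG p F)ˣ where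
  carrier := {u | (u : FG p F) - 1 ∈ gammaA p F}
  one_mem' := by simp
  mul_mem' := by
    intro u v hu hv
    have h : ((↑(u * v) : FG p F)) - 1
        = (u : FG p F) * ((v : FG p F) - 1) + ((u : FG p F) - 1) := by
      push_cast
      noncomm_ring
    show ((↑(u * v) : FG p F)) - 1 ∈ gammaA p F
    rw [h]
    exact (gammaA p F).add_mem (Ideal.mul_mem_left _ _ hv) hu
  inv_mem' := by
    intro u hu
    have h : ((↑u⁻¹ : FG p F)) - 1 = -((↑u⁻¹ : FG p F) * ((u : FG p F) - 1)) := by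
      rw [mul_sub, Units.inv_mul, mul_one, neg_sub]
    show ((↑u⁻¹ : FG p F)) - 1 ∈ gammaA p F
    rw [h]
    exact (gammaA p F).neg_mem (Ideal.mul_mem_left _ _ hu)

def iot (p : ℕ) : Multiplicative (ZMod 2) →* Dg p where
  toFun g := if (Multiplicative.toAdd g) = (0 : ZMod 2) then 1 else bb p
  map_one' := by simp
  map_mul' := by
    intro a b
    have h2 : ∀ x : ZMod 2, x = 0 ∨ x = 1 := by decide
    have hne : (1 : ZMod 2) ≠ 0 := by decide
    have h11 : (1 : ZMod 2) + 1 = 0 := by decide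
    rcases h2 (Multiplicative.toAdd a) with ha | ha <;>
      rcases h2 (Multiplicative.toAdd b) with hb | hb <;>
      simp [toAdd_mul, ha, hb, hne, h11, bb, DihedralGroup.sr_mul_sr]

lemma sgn_iot (p : ℕ) (x : Multiplicative (ZMod 2)) : sgn p (iot p x) = x := by
  have h2 : ∀ y : ZMod 2, y = 0 ∨ y = 1 := by decide
  rcases h2 (Multiplicative.toAdd x) with h | h
  · have : x = 1 := by
      have := congrArg Multiplicative.ofAdd h; simpa using this
    subst this; simp [iot, sgn]
  · have : x = Multiplicative.ofAdd 1 := by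
      have := congrArg Multiplicative.ofAdd h; simpa using this
    subst this
    simp [iot, sgn, bb, (by decide : (1:ZMod 2) ≠ 0)]
    rfl

lemma r_mem_Asub (p : ℕ) [NeZero p] (i : ZMod p) : DihedralGroup.r i ∈ Asub p := by
  refine ⟨(i.val : ℤ), ?_⟩
  show (DihedralGroup.r 1 : Dg p) ^ (i.val : ℤ) = DihedralGroup.r i
  rw [zpow_natCast, DihedralGroup.r_one_pow]
  congr 1
  simp [ZMod.natCast_val, ZMod.cast_id]

lemma inv_iot_mul_mem (p : ℕ) [NeZero p] (g : Dg p) :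
    (iot p (sgn p g))⁻¹ * g ∈ Asub p := by
  cases g with
  | r i =>
      have : sgn p (DihedralGroup.r i) = 1 := rfl
      rw [this]
      simpa [iot] using r_mem_Asub p i
  | sr i =>
      have h1 : sgn p (DihedralGroup.sr i) = Multiplicative.ofAdd 1 := rfl
      have h2 : iot p (Multiplicative.ofAdd (1 : ZMod 2)) = bb p := by
        simp [iot, (by decide : (1:ZMod 2) ≠ 0)]
      rw [h1, h2]
      have hinv : (bb p)⁻¹ = bb p := rfl
      rw [hinv]
      show DihedralGroup.sr 0 * DihedralGroup.sr i ∈ Asub p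
      rw [DihedralGroup.sr_mul_sr]
      exact r_mem_Asub p _

variable {p : ℕ} {F : Type} [Field F]

lemma mapDomainRingHom_eq {G H : Type*} [Monoid G] [Monoid H] (f : G →* H)
    (x : MonoidAlgebra F G) :
    MonoidAlgebra.mapDomainRingHom F f x = MonoidAlgebra.ofCoeff (Finsupp.mapDomain f x.coeff) := rfl

lemma of_sub_mem [NeZero p] (g : Dg p) :
    (MonoidAlgebra.of F (Dg p) g : FG p F) - MonoidAlgebra.of F (Dg p) (iot p (sgn p g))
      ∈ gammaA p F := by
  set k := iot p (sgn p g) with hk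
  have hmem : k⁻¹ * g ∈ Asub p := inv_iot_mul_mem p g
  have hid : (MonoidAlgebra.of F (Dg p) g : FG p F) - MonoidAlgebra.of F (Dg p) k
      = MonoidAlgebra.of F (Dg p) k * (MonoidAlgebra.of F (Dg p) (k⁻¹ * g) - 1) := by
    rw [mul_sub, mul_one, ← map_mul, mul_inv_cancel_left]
  rw [hid]
  exact Ideal.mul_mem_left _ _ (Ideal.subset_span (Set.mem_image_of_mem _ hmem))

lemma sub_proj_mem [NeZero p] (x : FG p F) :
    x - MonoidAlgebra.mapDomainRingHom F ((iot p).comp (sgn p)) x ∈ gammaA p F := by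
  induction x using MonoidAlgebra.induction_linear with
  | zero => simp
  | add f g hf hg =>
      rw [map_add, ← sub_add_sub_comm]
      exact (gammaA p F).add_mem hf hg
  | single g c =>
      rw [MonoidAlgebra.mapDomainRingHom_apply, MonoidAlgebra.mapDomain_single]
      have hid : (MonoidAlgebra.single g c : FG p F) - MonoidAlgebra.single ((iot p).comp (sgn p) g) c
          = (MonoidAlgebra.single (1 : Dg p) c)
            * (MonoidAlgebra.of F (Dg p) g - MonoidAlgebra.of F (Dg p) (iot p (sgn p g))) := by
        rw [mul_sub]
        simp [MonoidAlgebra.of_apply, MonoidAlgebra.single_mul_single]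
      rw [hid]
      exact Ideal.mul_mem_left _ _ (of_sub_mem g)

lemma ringKer_eq [NeZero p] :
    RingHom.ker (MonoidAlgebra.mapDomainRingHom F (sgn p)) = gammaA p F := by
  apply le_antisymm
  · intro x hx
    have h1 := sub_proj_mem (p := p) (F := F) x
    have h2 : MonoidAlgebra.mapDomainRingHom F ((iot p).comp (sgn p)) x = 0 := by
      rw [mapDomainRingHom_eq]
      have : ⇑((iot p).comp (sgn p)) = ⇑(iot p) ∘ ⇑(sgn p) := rfl
      rw [this, Finsupp.mapDomain_comp]
      have h0 : Finsupp.mapDomain (⇑(sgn p)) x.coeff = 0 := by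
        rw [RingHom.mem_ker, mapDomainRingHom_eq] at hx; exact congrArg MonoidAlgebra.coeff hx
      rw [h0, Finsupp.mapDomain_zero]
      rfl
    rw [h2, sub_zero] at h1
    exact h1
  · rw [gammaA, Ideal.span_le]
    rintro _ ⟨h, hh, rfl⟩
    rw [SetLike.mem_coe, Asub, Subgroup.mem_zpowers_iff] at hh
    obtain ⟨n, rfl⟩ := hh
    rw [SetLike.mem_coe, RingHom.mem_ker]
    have hs : sgn p ((aa p) ^ n) = 1 := by
      rw [map_zpow]
      have : sgn p (aa p) = 1 := rfl
      rw [this, one_zpow]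
    show MonoidAlgebra.mapDomainRingHom F (sgn p)
        (MonoidAlgebra.of F (Dg p) ((aa p) ^ n) - 1) = 0
    rw [map_sub, map_one]
    have : MonoidAlgebra.mapDomainRingHom F (sgn p) (MonoidAlgebra.of F (Dg p) ((aa p) ^ n))
        = MonoidAlgebra.of F (Multiplicative (ZMod 2)) (sgn p ((aa p) ^ n)) := by
      rw [MonoidAlgebra.mapDomainRingHom_apply]
      simp [MonoidAlgebra.of_apply, MonoidAlgebra.mapDomain_single]
    rw [this, hs, map_one, sub_self]

/-! ### `F[C₂] ≅ F × F` -/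

def chi (F : Type) [Field F] : Multiplicative (ZMod 2) →* F where
  toFun g := if (Multiplicative.toAdd g) = (0 : ZMod 2) then 1 else -1
  map_one' := by simp
  map_mul' := by
    intro a b
    have h2 : ∀ x : ZMod 2, x = 0 ∨ x = 1 := by decide
    rcases h2 (Multiplicative.toAdd a) with ha | ha <;>
      rcases h2 (Multiplicative.toAdd b) with hb | hb <;>
      simp [toAdd_mul, ha, hb, (by decide : (1:ZMod 2) ≠ 0), (by decide : (1:ZMod 2)+1 = 0)]

def fwd (F : Type) [Field F] : MonoidAlgebra F (Multiplicative (ZMod 2)) →+* F × F :=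
  (((MonoidAlgebra.lift F F (Multiplicative (ZMod 2))) 1).toRingHom).prod
    (((MonoidAlgebra.lift F F (Multiplicative (ZMod 2))) (chi F)).toRingHom)

lemma fwd_single (F : Type) [Field F] (g : Multiplicative (ZMod 2)) (c : F) :
    fwd F (MonoidAlgebra.single g c) = (c, c * chi F g) := by
  simp [fwd, RingHom.prod_apply, MonoidAlgebra.lift_single, smul_eq_mul]

lemma C2_decomp (F : Type) [Field F] (x : MonoidAlgebra F (Multiplicative (ZMod 2))) :
    x = MonoidAlgebra.single (1 : Multiplicative (ZMod 2)) (x.coeff 1)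
      + MonoidAlgebra.single (Multiplicative.ofAdd (1 : ZMod 2)) (x.coeff (Multiplicative.ofAdd 1)) := by
  ext g
  have h2 : ∀ y : ZMod 2, y = 0 ∨ y = 1 := by decide
  rcases h2 (Multiplicative.toAdd g) with h | h
  · have hg : g = 1 := by have := congrArg Multiplicative.ofAdd h; simpa using this
    subst hg
    rw [MonoidAlgebra.coeff_add, Finsupp.add_apply, MonoidAlgebra.coeff_single, Finsupp.single_eq_same,
        MonoidAlgebra.coeff_single, Finsupp.single_eq_of_ne (by decide), add_zero]
  · have hg : g = Multiplicative.ofAdd 1 := by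
      have := congrArg Multiplicative.ofAdd h; simpa using this
    subst hg
    rw [MonoidAlgebra.coeff_add, Finsupp.add_apply, MonoidAlgebra.coeff_single, Finsupp.single_eq_of_ne (by decide),
        MonoidAlgebra.coeff_single, Finsupp.single_eq_same, zero_add]

def C2e (F : Type) [Field F] (h2 : (2 : F) ≠ 0) :
    MonoidAlgebra F (Multiplicative (ZMod 2)) ≃+* F × F :=
  { toFun := fwd F
    invFun := fun uv => MonoidAlgebra.single 1 ((uv.1 + uv.2) / 2)
      + MonoidAlgebra.single (Multiplicative.ofAdd (1 : ZMod 2)) ((uv.1 - uv.2) / 2)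
    left_inv := by
      intro x
      have hx := C2_decomp F x
      set a := x.coeff 1
      set b := x.coeff (Multiplicative.ofAdd (1 : ZMod 2))
      rw [hx, map_add, fwd_single, fwd_single]
      have hc1 : chi F (1 : Multiplicative (ZMod 2)) = 1 := by simp [chi]
      have hc2 : chi F (Multiplicative.ofAdd (1 : ZMod 2)) = -1 := by
        simp [chi, (by decide : (1:ZMod 2) ≠ 0)]
      rw [hc1, hc2]
      have hprod : ((a, a * 1) + (b, b * -1) : F × F) = (a + b, a - b) := by
        ext <;> simp <;> ring
      rw [hprod]
      show MonoidAlgebra.single (1 : Multiplicative (ZMod 2)) (((a+b) + (a-b))/2)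
          + MonoidAlgebra.single (Multiplicative.ofAdd (1 : ZMod 2)) (((a+b) - (a-b))/2)
          = _
      congr 1
      · congr 1
        field_simp
        ring
      · congr 1
        field_simp
        ring
    right_inv := by
      intro uv
      rw [map_add, fwd_single, fwd_single]
      have hc1 : chi F (1 : Multiplicative (ZMod 2)) = 1 := by simp [chi]
      have hc2 : chi F (Multiplicative.ofAdd (1 : ZMod 2)) = -1 := by
        simp [chi, (by decide : (1:ZMod 2) ≠ 0)]
      rw [hc1, hc2]
      ext <;> simp <;> field_simp <;> ring
    map_mul' := (fwd F).map_mul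
    map_add' := (fwd F).map_add }

/-! ### Split exact sequence gives semidirect product -/

theorem split_semidirect {G H : Type} [Group G] [Group H] (θ : G →* H) (s : H →* G)
    (hs : ∀ h, θ (s h) = h) (N : Subgroup G) (hN : θ.ker = N) :
    ∃ act : H →* MulAut N, Nonempty (G ≃* N ⋊[act] H) := by
  subst hN
  haveI : θ.ker.Normal := θ.normal_ker
  refine ⟨MulAut.conjNormal.comp s, ⟨?_⟩⟩
  refine
    { toFun := fun g => ⟨⟨g * (s (θ g))⁻¹, by simp [MonoidHom.mem_ker, hs]⟩, θ g⟩
      invFun := fun x => (x.left : G) * s x.right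
      left_inv := by intro g; simp
      right_inv := by
        rintro ⟨n, h⟩
        have hn : θ (n : G) = 1 := n.2
        ext
        · simp [hn, hs]
        · simp [hn, hs]
      map_mul' := by
        intro g₁ g₂
        ext
        · show (g₁ * g₂) * (s (θ (g₁ * g₂)))⁻¹
            = (g₁ * (s (θ g₁))⁻¹) * (s (θ g₁) * ((g₂ * (s (θ g₂))⁻¹)) * (s (θ g₁))⁻¹)
          rw [map_mul, map_mul, mul_inv_rev]
          group
        · show θ (g₁ * g₂) = θ g₁ * θ g₂
          exact map_mul θ g₁ g₂ }

/-- `𝒰(FD_{2p}) ≅ (1 + Γ(A)) ⋊ (F* × F*)`: the natural epimorphism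
`𝒰(FD_{2p}) → 𝒰(FC₂)` induced by `D_{2p} → D_{2p}/A ≅ C₂` is surjective, has kernel
`1 + Γ(A)`, and splits; moreover `𝒰(FC₂) ≅ F* × F*`, and consequently `𝒰(FD_{2p})` is
isomorphic to a semidirect product `(1 + Γ(A)) ⋊ (F* × F*)`. -/
theorem stmt15 (p : ℕ) (hp : p.Prime) (hodd : Odd p)
    (F : Type) [Field F] [Fintype F] [CharP F p] :
    ∀ θ : (FG p F)ˣ →* (MonoidAlgebra F (Multiplicative (ZMod 2)))ˣ,
      θ = Units.map (MonoidAlgebra.mapDomainRingHom F (sgn p)).toMonoidHom →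
      -- the natural map is an epimorphism with kernel `1 + Γ(A)` …
      Function.Surjective θ ∧
      θ.ker = oneGammaU p F ∧
      -- … which splits …
      (∃ s : (MonoidAlgebra F (Multiplicative (ZMod 2)))ˣ →* (FG p F)ˣ,
        θ.comp s = MonoidHom.id _) ∧
      -- … and `𝒰(FC₂) ≅ F* × F*`
      Nonempty ((MonoidAlgebra F (Multiplicative (ZMod 2)))ˣ ≃* Fˣ × Fˣ) ∧
      -- hence `𝒰(FD_{2p}) ≅ (1 + Γ(A)) ⋊ (F* × F*)`
      (∃ act : Fˣ × Fˣ →* MulAut (oneGammaU p F),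
        Nonempty ((FG p F)ˣ ≃* SemidirectProduct (oneGammaU p F) (Fˣ × Fˣ) act)) := by
  intro θ hθ
  haveI : NeZero p := ⟨hp.pos.ne'⟩
  have h2F : (2 : F) ≠ 0 := by
    intro h
    have hcast : ((2 : ℕ) : F) = 0 := by exact_mod_cast h
    have hdvd : p ∣ 2 := (CharP.cast_eq_zero_iff F p 2).mp hcast
    have hp2 : p = 2 := (Nat.prime_dvd_prime_iff_eq hp Nat.prime_two).mp hdvd
    rw [hp2] at hodd
    exact (by decide : ¬ Odd 2) hodd
  subst hθ
  set φ := MonoidAlgebra.mapDomainRingHom F (sgn p) with hφ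
  set s : (MonoidAlgebra F (Multiplicative (ZMod 2)))ˣ →* (FG p F)ˣ :=
    Units.map (MonoidAlgebra.mapDomainRingHom F (iot p)).toMonoidHom with hsdef
  have hsec : ∀ v, Units.map φ.toMonoidHom (s v) = v := by
    intro v
    rw [Units.ext_iff]
    show φ ((MonoidAlgebra.mapDomainRingHom F (iot p)) ↑v) = ↑v
    rw [hφ, mapDomainRingHom_eq, mapDomainRingHom_eq, MonoidAlgebra.coeff_ofCoeff, ← Finsupp.mapDomain_comp]
    have hci : (⇑(sgn p) ∘ ⇑(iot p)) = id := funext (sgn_iot p)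
    rw [hci, Finsupp.mapDomain_id]
  have hker : (Units.map φ.toMonoidHom).ker = oneGammaU p F := by
    ext u
    have e1 : (Units.map φ.toMonoidHom u = 1) ↔ φ (↑u) = 1 := by
      rw [Units.ext_iff]
      exact Iff.rfl
    rw [MonoidHom.mem_ker, e1]
    have e2 : φ (↑u) = 1 ↔ φ ((↑u : FG p F) - 1) = 0 := by
      rw [map_sub, map_one, sub_eq_zero]
    rw [e2, ← RingHom.mem_ker, hφ, ringKer_eq]
    exact Iff.rfl
  refine ⟨?_, hker, ⟨s, MonoidHom.ext hsec⟩, ?_, ?_⟩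
  · intro v
    exact ⟨s v, hsec v⟩
  · exact ⟨(Units.mapEquiv (C2e F h2F).toMulEquiv).trans MulEquiv.prodUnits⟩
  · set e : (MonoidAlgebra F (Multiplicative (ZMod 2)))ˣ ≃* Fˣ × Fˣ :=
      (Units.mapEquiv (C2e F h2F).toMulEquiv).trans MulEquiv.prodUnits with he
    set θ' : (FG p F)ˣ →* Fˣ × Fˣ := e.toMonoidHom.comp (Units.map φ.toMonoidHom) with hθ'
    have hs' : ∀ h, θ' ((s.comp e.symm.toMonoidHom) h) = h := by
      intro h
      show e (Units.map φ.toMonoidHom (s (e.symm h))) = h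
      rw [hsec (e.symm h), MulEquiv.apply_symm_apply]
    have hkereq : θ'.ker = oneGammaU p F := by
      rw [← hker]
      ext u
      simp only [MonoidHom.mem_ker, hθ', MonoidHom.comp_apply, MulEquiv.coe_toMonoidHom,
        EmbeddingLike.map_eq_one_iff]
    exact split_semidirect θ' (s.comp e.symm.toMonoidHom) hs' (oneGammaU p F) hkereq
end
end
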